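/- For integers k ≥ 0 and real s > 1, define u_k = a·T_{k+1}(s)/T_k(s) where a = 2/(1+s) and T_n is the Chebyshev polynomial of the first kind. Then the sequence (u_k) is strictly increasing in k, u_0 = 2 − a, and u_k → a·(s + √(s²−1)) as k → ∞. -/
import Mathlib


open Polynomial Polynomial.Chebyshev Filter

/-- For `s > 1` and `a = 2/(1+s)`, the sequence `u_k = a·T_{k+1}(s)/T_k(s)` is
strictly increasing, starts at `u_0 = 2 - a`, and converges to
`a·(s + √(s² - 1))`. -/
theorem stmt_9 (s : ℝ) (hs : 1 < s) (a : ℝ) (ha : a = 2 / (1 + s))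
    (u : ℕ → ℝ)
    (hu : ∀ k, u k = a * (Chebyshev.T ℝ (k + 1)).eval s / (Chebyshev.T ℝ k).eval s) :
    StrictMono u ∧ u 0 = 2 - a ∧
      Tendsto u atTop (nhds (a * (s + Real.sqrt (s ^ 2 - 1)))) := by
  set r := Real.sqrt (s ^ 2 - 1) with hr
  have hs0 : (0:ℝ) < s := by linarith
  have hr2 : r ^ 2 = s ^ 2 - 1 := Real.sq_sqrt (by nlinarith)
  have hrpos : 0 < r := Real.sqrt_pos.mpr (by nlinarith)
  set p := s + r with hp
  set q := s - r with hq
  clear_value r p q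
  have hpq : p * q = 1 := by rw [hp, hq]; nlinarith
  have hqpos : 0 < q := by
    have : r < s := by nlinarith
    simp [hq]; linarith
  have hppos : 0 < p := by rw [hp]; positivity
  have hp1 : 1 < p := by nlinarith
  have hqp : q < p := by simp [hp, hq]; linarith
  have ha0 : 0 < a := by rw [ha]; positivity
  -- T_k(s) = (p^k + q^k)/2
  have hT : ∀ k : ℕ, (Chebyshev.T ℝ (k : ℤ)).eval s = (p ^ k + q ^ k) / 2 := by
    intro k
    induction k using Nat.twoStepInduction with
    | zero => simp
    | one => simp [hp, hq]
    | more n ih1 ih2 =>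
      have : ((n + 2 : ℕ) : ℤ) = (n : ℤ) + 2 := by push_cast; ring
      rw [this, Chebyshev.T_add_two]
      have h1 : ((n + 1 : ℕ) : ℤ) = (n : ℤ) + 1 := by push_cast; ring
      rw [h1] at ih2
      simp only [Polynomial.eval_sub, Polynomial.eval_mul, Polynomial.eval_ofNat,
        Polynomial.eval_X, ih1, ih2]
      have hps : p ^ 2 = 2 * s * p - 1 := by nlinarith
      have hqs : q ^ 2 = 2 * s * q - 1 := by nlinarith
      have : p ^ (n + 2) = (2 * s * p - 1) * p ^ n := by
        rw [← hps]; ring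
      rw [this]
      have : q ^ (n + 2) = (2 * s * q - 1) * q ^ n := by
        rw [← hqs]; ring
      rw [this]
      ring
  have hTpos : ∀ k : ℕ, 0 < (p ^ k + q ^ k) / 2 := fun k => by positivity
  have hu' : ∀ k : ℕ, u k = a * (p ^ (k + 1) + q ^ (k + 1)) / (p ^ k + q ^ k) := by
    intro k
    have h1 : ((k : ℤ) + 1) = ((k + 1 : ℕ) : ℤ) := by push_cast; ring
    rw [hu k, h1, hT, hT]
    have hk : (0:ℝ) < p ^ k + q ^ k := by positivity
    field_simp
  have hpqk : ∀ k : ℕ, p ^ k * q ^ k = 1 := by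
    intro k; rw [← mul_pow, hpq, one_pow]
  constructor
  · apply strictMono_nat_of_lt_succ
    intro k
    rw [hu' k, hu' (k + 1)]
    rw [div_lt_div_iff₀ (by positivity) (by positivity)]
    have e1 : p ^ (k + 1) * q ^ (k + 1) = 1 := hpqk (k + 1)
    have e2 : p ^ (k + 2) * q ^ k = p ^ 2 := by
      have := hpqk k
      have : p ^ (k + 2) * q ^ k = p ^ 2 * (p ^ k * q ^ k) := by ring
      rw [this, hpqk k, mul_one]
    have e3 : q ^ (k + 2) * p ^ k = q ^ 2 := by
      have : q ^ (k + 2) * p ^ k = q ^ 2 * (p ^ k * q ^ k) := by ring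
      rw [this, hpqk k, mul_one]
    have hd : (0:ℝ) < (p - q) ^ 2 := pow_pos (sub_pos.mpr hqp) 2
    have f1 : p ^ (k + 1) * p ^ (k + 1) = p ^ (k + 2) * p ^ k := by ring
    have f2 : q ^ (k + 1) * q ^ (k + 1) = q ^ (k + 2) * q ^ k := by ring
    have key : (p ^ (k + 1) + q ^ (k + 1)) * (p ^ (k + 1) + q ^ (k + 1)) <
        (p ^ (k + 2) + q ^ (k + 2)) * (p ^ k + q ^ k) := by
      nlinarith [e1, e2, e3, hd, hpq, f1, f2]
    rw [mul_assoc, mul_assoc]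
    exact mul_lt_mul_of_pos_left key ha0
  constructor
  · rw [hu' 0, ha]
    have h1 : (1:ℝ) + s ≠ 0 := by positivity
    simp only [pow_zero, zero_add, pow_one]
    have h2 : p + q = 2 * s := by rw [hp, hq]; ring
    rw [h2]
    field_simp
    ring
  · -- limit
    have htq : Tendsto (fun k : ℕ => (q / p) ^ k) atTop (nhds 0) := by
      apply tendsto_pow_atTop_nhds_zero_of_lt_one (by positivity)
      rw [div_lt_one hppos]; exact hqp
    have hform : ∀ k : ℕ, u k = a * (p + q * (q / p) ^ k) / (1 + (q / p) ^ k) := by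
      intro k
      rw [hu' k]
      have hpk : (0:ℝ) < p ^ k := by positivity
      rw [div_pow]
      field_simp
      try ring
      try tauto
    have hlim : Tendsto (fun k : ℕ => a * (p + q * (q / p) ^ k) / (1 + (q / p) ^ k))
        atTop (nhds (a * (p + q * 0) / (1 + 0))) := by
      apply Tendsto.div
      · exact (((htq.const_mul q).const_add p).const_mul a)
      · exact htq.const_add 1
      · norm_num
    simp only [mul_zero, add_zero] at hlim
    have : a * p / 1 = a * p := by ring
    rw [this] at hlim
    exact hlim.congr (fun k => (hform k).symm)
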